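/- On points (the codimension-3 stratum), the vertex action S^{(3)} = Σ ½ Tr([c,c] ∧ (ε_a ξ^a + ε_m ξ^m + ε_n ξ^n)) and vertex vector field Q^{(3)}c = ½[c,c], Q^{(3)}ξ^μ = Σ_ν [c, ε_ν ξ^ν]^{(μ)} satisfy the master equation ι_{Q^{(3)}} ι_{Q^{(3)}} ϖ^{(3)} = 0, where ϖ^{(3)} = -Σ_μ Tr(ε_μ δξ^μ ∧ δc); equivalently Q^{(3)}(S^{(3)}) = 0. -/
import Mathlib


/-- The vertex (codimension-3) master equation of Proposition 3.3, reduced to a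
finite-dimensional super-algebra computation.  `L` is a graded module carrying the ghost
`c ∈ 𝒜 1` (valued in `Λ²V ≅ so(2,1)`) and the odd element `v = ε_a ξᵃ + ε_m ξᵐ + ε_n ξⁿ ∈ 𝒜 1`;
`br` is the graded bracket and `T x y` models the invariant trace pairing `Tr(x ∧ y)`.  For
the vertex action `S⁽³⁾ = ½ Tr([c,c] ∧ v)` and the vertex vector field
`Q⁽³⁾c = ½[c,c]`, `Q⁽³⁾v = [c,v]`, one has `ι_{Q⁽³⁾} ι_{Q⁽³⁾} ϖ⁽³⁾ = 0`, equivalently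
`Q⁽³⁾(S⁽³⁾) = ½ Tr(([Qc,c] + [c,Qc]) ∧ v) + ½ Tr([c,c] ∧ [c,v]) = 0`. -/
theorem vertex_master_equation
    {L : Type*} [AddCommGroup L] [Module ℝ L]
    (𝒜 : ℤ → Submodule ℝ L)
    (br : L →ₗ[ℝ] L →ₗ[ℝ] L)
    (T : L →ₗ[ℝ] L →ₗ[ℝ] ℝ)
    (hbr_mem : ∀ (i j : ℤ) (x y : L), x ∈ 𝒜 i → y ∈ 𝒜 j → br x y ∈ 𝒜 (i + j))
    (hanti : ∀ (i j : ℤ) (x y : L), x ∈ 𝒜 i → y ∈ 𝒜 j →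
      br x y = -(((-1 : ℤˣ) ^ (i * j) : ℤˣ) : ℤ) • br y x)
    (hjacobi : ∀ (i j : ℤ) (x y z : L), x ∈ 𝒜 i → y ∈ 𝒜 j →
      br x (br y z) = br (br x y) z + (((-1 : ℤˣ) ^ (i * j) : ℤˣ) : ℤ) • br y (br x z))
    -- ad-invariance of the trace pairing
    (hT_inv : ∀ (i j : ℤ) (a x y : L), a ∈ 𝒜 i → x ∈ 𝒜 j →
      T (br a x) y + (((-1 : ℤˣ) ^ (i * j) : ℤˣ) : ℤ) • T x (br a y) = 0)
    (c v : L) (hc : c ∈ 𝒜 1) (hv : v ∈ 𝒜 1) :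
    (2⁻¹ : ℝ) • (T (br ((2⁻¹ : ℝ) • br c c) c) v + T (br c ((2⁻¹ : ℝ) • br c c)) v)
      + (2⁻¹ : ℝ) • T (br c c) (br c v) = 0 := by
  have h2 : br c c ∈ 𝒜 2 := by simpa using hbr_mem 1 1 c c hc hc
  have hJ := hjacobi 1 1 c c c hc hc
  have hA := hanti 2 1 (br c c) c h2 hc
  have hu2 : (((-1 : ℤˣ) ^ (2:ℤ) : ℤˣ) : ℤ) = 1 := by decide
  norm_num [hu2] at hJ hA
  -- key : [c,[c,c]] = 0
  have key : br c (br c c) = 0 := by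
    rw [hA] at hJ
    -- hJ : br c (br c c) = -br c (br c c) + -br c (br c c)  (after simp)
    have h0 : br c (br c c) + br c (br c c) + br c (br c c) = 0 := by
      nth_rewrite 1 [hJ]; abel
    have h3 : (3 : ℝ) • br c (br c c) = 0 := by
      rw [show (3 : ℝ) • br c (br c c)
          = br c (br c c) + br c (br c c) + br c (br c c) from by module]
      exact h0
    rcases smul_eq_zero.mp h3 with h | h
    · norm_num at h
    · exact h
  have hInv := hT_inv 1 2 c (br c c) v hc h2
  norm_num [hu2] at hInv
  rw [key] at hInv
  simp only [map_smul, LinearMap.smul_apply, key, hA, map_zero, LinearMap.zero_apply,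
    smul_zero, neg_zero, add_zero, zero_add]
  simp at hInv ⊢
  linarith [hInv]
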